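/- Let M be a von Neumann algebra on a complex Hilbert space H, let ξ, η ∈ H, and let S : H → H be a continuous conjugate-linear map satisfying S(Pξ) = P†η for all P ∈ M (in particular η = Sξ). Let Δ be a bounded linear operator on H satisfying ⟨Δx, y⟩ = ⟨Sy, Sx⟩ for all x, y ∈ H (so Δ = S†S), and suppose Δξ = ξ. Then ⟨η, Pη⟩ = ⟨ξ, Pξ⟩ for all P ∈ M. -/

import Mathlib

/-- if `S` is a (bounded) relative Tomita operator for the pair
`(ξ, η)` with respect to `M` (so `S(Pξ) = P†η` for all `P ∈ M`), `Δ = S†S` is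
its adjoint-square, and `Δξ = ξ` (vanishing relative entropy), then the states
`η` and `ξ` agree on `M`: `⟨η, Pη⟩ = ⟨ξ, Pξ⟩` for all `P ∈ M`. -/
theorem states_agree_of_modular_fixed {H : Type*} [NormedAddCommGroup H]
    [InnerProductSpace ℂ H] [CompleteSpace H] (M : VonNeumannAlgebra H)
    (ξ η : H) (S : H →L⋆[ℂ] H)
    (hS : ∀ P ∈ M, S (P ξ) = (ContinuousLinearMap.adjoint P) η)
    (Δ : H →L[ℂ] H)
    (hΔ : ∀ x y : H, (inner ℂ (Δ x) y : ℂ) = inner ℂ (S y) (S x))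
    (hfix : Δ ξ = ξ) :
    ∀ P ∈ M, (inner ℂ η (P η) : ℂ) = inner ℂ ξ (P ξ) := by
  intro P hP
  have h1 : S ((1 : H →L[ℂ] H) ξ) = (ContinuousLinearMap.adjoint 1) η :=
    hS 1 M.one_mem
  have hid : (1 : H →L[ℂ] H) = ContinuousLinearMap.id ℂ H := rfl
  rw [hid, ContinuousLinearMap.adjoint_id] at h1
  simp only [ContinuousLinearMap.id_apply] at h1
  calc (inner ℂ η (P η) : ℂ)
      = inner ℂ ((ContinuousLinearMap.adjoint P) η) η := by
        rw [ContinuousLinearMap.adjoint_inner_left]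
    _ = inner ℂ (S (P ξ)) (S ξ) := by rw [hS P hP, h1]
    _ = inner ℂ (Δ ξ) (P ξ) := (hΔ ξ (P ξ)).symm
    _ = inner ℂ ξ (P ξ) := by rw [hfix]
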